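/- arXiv:2512.16299 — 2 statements merged into one kernel-verified Lean document; each statement's English description precedes it below -/
import Mathlib

section
/- Let d ≥ 4 and let j_1, ..., j_d be integers with |j_1| > |j_2| ≥ ... ≥ |j_d| and σ_1, ..., σ_d ∈ {-1,1} with σ_1 = 1, σ_2 = -1, satisfying ∑_l σ_l j_l² = 0. If |j_1| ≥ M then M + 1 ≤ |j_1| + |j_2| ≤ j_1² - j_2² ≤ (d-2)·j_3². -/
set_option maxHeartbeats 1000000


theorem resonance_strict_largest_case
    (d M : ℕ) (hd : 4 ≤ d) (hM : 0 < M)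
    (j : Fin d → ℤ) (σ : Fin d → ℤ) (hσ : ∀ l, σ l = 1 ∨ σ l = -1)
    (hord : ∀ k l : Fin d, k ≤ l → |j l| ≤ |j k|)
    (hstrict : |j ⟨1, by omega⟩| < |j ⟨0, by omega⟩|)
    (hσ1 : σ ⟨0, by omega⟩ = 1) (hσ2 : σ ⟨1, by omega⟩ = -1)
    (hres : ∑ l, σ l * (j l) ^ 2 = 0)
    (hM1 : (M : ℤ) ≤ |j ⟨0, by omega⟩|) :
    (M : ℤ) + 1 ≤ |j ⟨0, by omega⟩| + |j ⟨1, by omega⟩| ∧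
    |j ⟨0, by omega⟩| + |j ⟨1, by omega⟩| ≤ (j ⟨0, by omega⟩) ^ 2 - (j ⟨1, by omega⟩) ^ 2 ∧
    (j ⟨0, by omega⟩) ^ 2 - (j ⟨1, by omega⟩) ^ 2 ≤ ((d : ℤ) - 2) * (j ⟨2, by omega⟩) ^ 2 := by
  have h0d : 0 < d := by omega
  have h1d : 1 < d := by omega
  have h2d : 2 < d := by omega
  set i0 : Fin d := ⟨0, h0d⟩ with hi0
  set i1 : Fin d := ⟨1, h1d⟩ with hi1
  set i2 : Fin d := ⟨2, h2d⟩ with hi2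
  -- |j i1| ≥ 1
  have hb1 : 1 ≤ |j i1| := by
    by_contra hcon
    push_neg at hcon
    have hb0 : |j i1| = 0 := le_antisymm (by omega) (abs_nonneg _)
    have hall : ∀ l : Fin d, l ≠ i0 → j l = 0 := by
      intro l hl
      have hlv : (1 : ℕ) ≤ l.val := by
        rcases Nat.eq_zero_or_pos l.val with h0 | h0
        · exact absurd (Fin.ext h0) hl
        · exact h0
      have hle : |j l| ≤ |j i1| := hord i1 l (by rw [Fin.le_def]; exact hlv)
      have := abs_nonneg (j l)
      have : |j l| = 0 := by omega
      exact abs_eq_zero.mp this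
    have hsum : ∑ l, σ l * j l ^ 2 = σ i0 * j i0 ^ 2 := by
      rw [Finset.sum_eq_single i0]
      · intro b _ hb; rw [hall b hb]; ring
      · intro h; exact absurd (Finset.mem_univ i0) h
    rw [hres, hσ1, one_mul] at hsum
    have hj0 : j i0 = 0 := by nlinarith [sq_nonneg (j i0)]
    rw [hj0] at hstrict
    simp at hstrict
    omega
  have h01 : i1 ≠ i0 := by simp [hi0, hi1, Fin.ext_iff]
  set s : Finset (Fin d) := (Finset.univ.erase i0).erase i1 with hs
  have key : j i0 ^ 2 - j i1 ^ 2 = ∑ l ∈ s, (-σ l) * j l ^ 2 := by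
    rw [← Finset.add_sum_erase _ _ (Finset.mem_univ i0)] at hres
    rw [← Finset.add_sum_erase _ _ (Finset.mem_erase.mpr ⟨h01, Finset.mem_univ i1⟩)] at hres
    rw [hσ1, hσ2] at hres
    have hneg : ∑ l ∈ s, (-σ l) * j l ^ 2 = -∑ l ∈ s, σ l * j l ^ 2 := by
      rw [← Finset.sum_neg_distrib]
      exact Finset.sum_congr rfl (fun x _ => by ring)
    rw [hneg]
    linarith
  have hbound : ∀ l ∈ s, (-σ l) * j l ^ 2 ≤ j i2 ^ 2 := by
    intro l hl
    rw [hs, Finset.mem_erase, Finset.mem_erase] at hl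
    obtain ⟨hl1, hl0, -⟩ := hl
    have hlv : (2 : ℕ) ≤ l.val := by
      have h0 : l.val ≠ 0 := fun h => hl0 (Fin.ext h)
      have h1 : l.val ≠ 1 := fun h => hl1 (Fin.ext h)
      omega
    have hle : |j l| ≤ |j i2| := hord i2 l (by rw [Fin.le_def]; exact hlv)
    have hsq : j l ^ 2 ≤ j i2 ^ 2 := by
      rw [← sq_abs (j l), ← sq_abs (j i2)]
      exact pow_le_pow_left₀ (abs_nonneg _) hle 2
    rcases hσ l with h | h <;> rw [h] <;> nlinarith [sq_nonneg (j l)]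
  have hcard : s.card = d - 2 := by
    rw [hs, Finset.card_erase_of_mem (Finset.mem_erase.mpr ⟨h01, Finset.mem_univ i1⟩),
      Finset.card_erase_of_mem (Finset.mem_univ i0), Finset.card_univ, Fintype.card_fin]
    omega
  have hsum_le : ∑ l ∈ s, (-σ l) * j l ^ 2 ≤ (d - 2 : ℤ) * j i2 ^ 2 := by
    have := Finset.sum_le_card_nsmul s _ _ hbound
    rw [hcard] at this
    have hcast : ((d - 2 : ℕ) : ℤ) = (d : ℤ) - 2 := by omega
    calc ∑ l ∈ s, (-σ l) * j l ^ 2 ≤ (d - 2 : ℕ) • j i2 ^ 2 := this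
      _ = (d - 2 : ℤ) * j i2 ^ 2 := by rw [nsmul_eq_mul, hcast]
  refine ⟨by omega, ?_, by linarith⟩
  have ha : |j i0| ^ 2 = j i0 ^ 2 := sq_abs _
  have hb : |j i1| ^ 2 = j i1 ^ 2 := sq_abs _
  nlinarith [abs_nonneg (j i0), abs_nonneg (j i1)]
end

section
/- Let f(x) = (ln x)^θ with θ > 1, defined for x ≥ c with c = e^{c₀} for suitable c₀ > 1. Then there exists C_f < 1 and c large enough (depending on θ and d) such that for all x_1, ..., x_d ≥ c with x_m = max{x_1,...,x_d}: (ln(x_1 + ... + x_d))^θ ≤ (ln x_m)^θ + C_f ∑_{l ≠ m} (ln x_l)^θ. -/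
open Real in
-- MVT-type: x^θ - y^θ ≤ θ x^(θ-1) (x-y)
lemma aux_rpow_sub (θ x y : ℝ) (hθ : 1 ≤ θ) (hy : 0 < y) (hyx : y ≤ x) :
    x ^ θ ≤ y ^ θ + θ * x ^ (θ - 1) * (x - y) := by
  have hx : 0 < x := hy.trans_le hyx
  have hs : -1 ≤ (y - x) / x := by
    rw [le_div_iff₀ hx]; linarith
  have h := one_add_mul_self_le_rpow_one_add hs hθ
  have h1 : 1 + (y - x) / x = y / x := by field_simp; ring
  rw [h1, div_rpow hy.le hx.le] at h
  have hxθ : (0:ℝ) < x ^ θ := rpow_pos_of_pos hx θ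
  have h2 := mul_le_mul_of_nonneg_right h hxθ.le
  rw [div_mul_cancel₀ _ hxθ.ne'] at h2
  have h3 : x ^ (θ - 1) = x ^ θ / x := rpow_sub_one hx.ne' θ
  rw [h3]
  have : (1 + θ * ((y - x) / x)) * x ^ θ
      = x ^ θ - θ * (x ^ θ / x) * (x - y) := by
    field_simp; ring
  rw [this] at h2
  linarith
open Real in
-- (1+u)^n ≤ n^n * exp u for n ≥ 1
lemma aux_pow_exp (n : ℕ) (hn : 1 ≤ n) (u : ℝ) (hu : 0 ≤ u) :
    (1 + u) ^ n ≤ (n : ℝ) ^ n * Real.exp u := by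
  have hn' : (1:ℝ) ≤ n := by exact_mod_cast hn
  have h1 : 1 + u ≤ (n : ℝ) * Real.exp (u / n) := by
    have h2 : 1 + u / n ≤ Real.exp (u / n) := by linarith [Real.add_one_le_exp (u / n)]
    have h3 : (n:ℝ) * (1 + u / n) = n + u := by field_simp
    nlinarith [mul_le_mul_of_nonneg_left h2 (by linarith : (0:ℝ) ≤ n)]
  calc (1 + u) ^ n ≤ ((n : ℝ) * Real.exp (u / n)) ^ n := by
        apply pow_le_pow_left₀ (by linarith) h1
    _ = (n : ℝ) ^ n * Real.exp u := by
        rw [mul_pow, ← Real.exp_nat_mul]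
        congr 2
        field_simp

open Real in
lemma aux_term (θ D b a : ℝ) (hθ : 1 < θ) (hD : 0 ≤ D) (hb1 : 1 ≤ b) (hba : b ≤ a)
    (hK : 2 * (θ * (1 + D) ^ (θ - 1) * ((⌈θ⌉₊ : ℝ)) ^ (⌈θ⌉₊)) ≤ b) :
    θ * (a + D) ^ (θ - 1) * Real.exp (b - a) ≤ (1 / 2) * b ^ θ := by
  set n := ⌈θ⌉₊ with hn
  have hn1 : 1 ≤ n := Nat.one_le_ceil_iff.mpr (by linarith)
  have hθn : θ ≤ (n : ℝ) := Nat.le_ceil θ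
  set u := a - b with hu
  have hu0 : 0 ≤ u := by simp [hu]; linarith
  have hθ1 : (0:ℝ) ≤ θ - 1 := by linarith
  have hb0 : (0:ℝ) < b := by linarith
  have h1 : a + D ≤ b * (1 + u) * (1 + D) := by nlinarith [mul_nonneg (sub_nonneg.mpr hb1) hu0, mul_nonneg (sub_nonneg.mpr hb1) hD, mul_nonneg (mul_nonneg hb0.le hu0) hD]
  have h2 : (a + D) ^ (θ - 1) ≤ (b * (1 + u) * (1 + D)) ^ (θ - 1) :=
    rpow_le_rpow (by linarith) h1 hθ1
  have h2' : (b * (1 + u) * (1 + D)) ^ (θ - 1)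
      = b ^ (θ - 1) * (1 + u) ^ (θ - 1) * (1 + D) ^ (θ - 1) := by
    rw [mul_rpow (by positivity) (by linarith), mul_rpow (by positivity) (by linarith)]
  have h3 : (1 + u) ^ (θ - 1) ≤ (1 + u) ^ (n : ℕ) := by
    rw [← rpow_natCast (1 + u) n]
    exact rpow_le_rpow_of_exponent_le (by linarith) (by linarith)
  have h4 : (1 + u) ^ (n : ℕ) ≤ (n : ℝ) ^ n * Real.exp u := aux_pow_exp n hn1 u hu0
  have hexp : Real.exp u * Real.exp (b - a) = 1 := by
    rw [← Real.exp_add]; simp [hu]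
  have hexppos : (0:ℝ) < Real.exp (b - a) := Real.exp_pos _
  have h5 : θ * (a + D) ^ (θ - 1) * Real.exp (b - a)
      ≤ θ * (b ^ (θ - 1) * ((n : ℝ) ^ n * Real.exp u) * (1 + D) ^ (θ - 1)) * Real.exp (b - a) := by
    have hb' : (0:ℝ) ≤ b ^ (θ - 1) := by positivity
    have hD' : (0:ℝ) ≤ (1 + D) ^ (θ - 1) := by positivity
    have : (a + D) ^ (θ - 1) ≤ b ^ (θ - 1) * ((n : ℝ) ^ n * Real.exp u) * (1 + D) ^ (θ - 1) := by
      calc (a + D) ^ (θ - 1) ≤ b ^ (θ - 1) * (1 + u) ^ (θ - 1) * (1 + D) ^ (θ - 1) := by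
            rw [← h2']; exact h2
        _ ≤ b ^ (θ - 1) * ((n : ℝ) ^ n * Real.exp u) * (1 + D) ^ (θ - 1) := by
            apply mul_le_mul_of_nonneg_right _ hD'
            exact mul_le_mul_of_nonneg_left (h3.trans h4) hb'
    have := mul_le_mul_of_nonneg_left this (by linarith : (0:ℝ) ≤ θ)
    exact mul_le_mul_of_nonneg_right this hexppos.le
  have h6 : θ * (b ^ (θ - 1) * ((n : ℝ) ^ n * Real.exp u) * (1 + D) ^ (θ - 1)) * Real.exp (b - a)
      = (θ * (1 + D) ^ (θ - 1) * (n : ℝ) ^ n) * b ^ (θ - 1) := by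
    have : θ * (b ^ (θ - 1) * ((n : ℝ) ^ n * Real.exp u) * (1 + D) ^ (θ - 1)) * Real.exp (b - a)
        = (θ * (1 + D) ^ (θ - 1) * (n : ℝ) ^ n) * b ^ (θ - 1) * (Real.exp u * Real.exp (b - a)) := by
      ring
    rw [this, hexp, mul_one]
  have hbθ : b ^ (θ - 1) * b = b ^ θ := by
    rw [rpow_sub_one hb0.ne' θ, div_mul_cancel₀ _ hb0.ne']
  calc θ * (a + D) ^ (θ - 1) * Real.exp (b - a)
      ≤ (θ * (1 + D) ^ (θ - 1) * (n : ℝ) ^ n) * b ^ (θ - 1) := by rw [← h6]; exact h5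
    _ ≤ (b / 2) * b ^ (θ - 1) := by
        apply mul_le_mul_of_nonneg_right (by linarith) (by positivity)
    _ = (1 / 2) * b ^ θ := by rw [← hbθ]; ring

theorem log_weight_admissible (θ : ℝ) (hθ : 1 < θ) (d : ℕ) (hd : 2 ≤ d) :
    ∃ Cf : ℝ, Cf < 1 ∧ ∃ c : ℝ, 1 < c ∧
      ∀ (x : Fin d → ℝ), (∀ l, c ≤ x l) →
        ∀ m : Fin d, (∀ l, x l ≤ x m) →
          (Real.log (∑ l, x l)) ^ θ ≤
            (Real.log (x m)) ^ θ + Cf * ∑ l ∈ Finset.univ.erase m, (Real.log (x l)) ^ θ := by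
  set D := Real.log d with hDdef
  have hd1 : (1:ℝ) ≤ (d:ℝ) := by exact_mod_cast Nat.one_le_of_lt hd
  have hD : 0 ≤ D := Real.log_nonneg hd1
  set n := ⌈θ⌉₊ with hn
  set K := θ * (1 + D) ^ (θ - 1) * (n : ℝ) ^ n with hKdef
  have hK0 : 0 ≤ K := by
    apply mul_nonneg (mul_nonneg (by linarith) (by positivity))
    positivity
  set L := max 1 (2 * K) with hLdef
  have hL1 : (1:ℝ) ≤ L := le_max_left _ _
  have hLK : 2 * K ≤ L := le_max_right _ _
  refine ⟨1/2, by norm_num, Real.exp L, ?_, ?_⟩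
  · rw [show (1:ℝ) = Real.exp 0 by simp]
    exact Real.exp_lt_exp.mpr (by linarith)
  intro x hx m hm
  have hxpos : ∀ l, 0 < x l := fun l => lt_of_lt_of_le (Real.exp_pos L) (hx l)
  have hlog : ∀ l, L ≤ Real.log (x l) := by
    intro l
    have := Real.log_le_log (Real.exp_pos L) (hx l)
    rwa [Real.log_exp] at this
  set a := Real.log (x m) with ha
  have haL : L ≤ a := hlog m
  have ha1 : (1:ℝ) ≤ a := le_trans hL1 haL
  have hblea : ∀ l, Real.log (x l) ≤ a := fun l => Real.log_le_log (hxpos l) (hm l)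
  set T := ∑ l ∈ Finset.univ.erase m, x l with hT
  have hsum : x m + T = ∑ l, x l := Finset.add_sum_erase _ x (Finset.mem_univ m)
  have hT0 : 0 ≤ T := Finset.sum_nonneg fun l _ => (hxpos l).le
  set r := T / x m with hr
  have hr0 : 0 ≤ r := div_nonneg hT0 (hxpos m).le
  have hcard : (Finset.univ.erase m).card = d - 1 := by
    rw [Finset.card_erase_of_mem (Finset.mem_univ m), Finset.card_univ, Fintype.card_fin]
  have hTle : T ≤ ((d:ℝ) - 1) * x m := by
    have := Finset.sum_le_card_nsmul (Finset.univ.erase m) x (x m) (fun l _ => hm l)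
    rw [hcard] at this
    have hcast : ((d - 1 : ℕ) : ℝ) = (d:ℝ) - 1 := by
      have : (1:ℕ) ≤ d := by omega
      push_cast [this]; ring
    calc T ≤ (d - 1 : ℕ) • x m := this
      _ = ((d:ℝ) - 1) * x m := by rw [nsmul_eq_mul, hcast]
  have hrd : r ≤ (d:ℝ) - 1 := by
    rw [hr, div_le_iff₀ (hxpos m)]
    linarith
  set s := Real.log (1 + r) with hs
  have hs0 : 0 ≤ s := Real.log_nonneg (by linarith)
  have hsr : s ≤ r := by
    have := Real.log_le_sub_one_of_pos (show (0:ℝ) < 1 + r by linarith)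
    linarith
  have hsD : s ≤ D := by
    rw [hs, hDdef]
    exact Real.log_le_log (by linarith) (by linarith)
  have hlogS : Real.log (∑ l, x l) = a + s := by
    have h1 : (∑ l, x l) = x m * (1 + r) := by
      rw [← hsum, hr]
      field_simp [(hxpos m).ne']
    rw [h1, Real.log_mul (hxpos m).ne' (by positivity : (1:ℝ) + r ≠ 0)]
  rw [hlogS]
  have step1 : (a + s) ^ θ ≤ a ^ θ + θ * (a + s) ^ (θ - 1) * s := by
    have := aux_rpow_sub θ (a + s) a hθ.le (by linarith) (by linarith)
    calc (a + s) ^ θ ≤ a ^ θ + θ * (a + s) ^ (θ - 1) * (a + s - a) := this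
      _ = a ^ θ + θ * (a + s) ^ (θ - 1) * s := by ring_nf
  have step2 : θ * (a + s) ^ (θ - 1) * s ≤ θ * (a + D) ^ (θ - 1) * r := by
    have h1 : (a + s) ^ (θ - 1) ≤ (a + D) ^ (θ - 1) :=
      Real.rpow_le_rpow (by linarith) (by linarith) (by linarith)
    have h2 : (0:ℝ) ≤ (a + s) ^ (θ - 1) := by positivity
    apply mul_le_mul (mul_le_mul_of_nonneg_left h1 (by linarith)) hsr hs0
    positivity
  have step3 : θ * (a + D) ^ (θ - 1) * r
      ≤ (1/2) * ∑ l ∈ Finset.univ.erase m, (Real.log (x l)) ^ θ := by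
    have hrw : θ * (a + D) ^ (θ - 1) * r
        = ∑ l ∈ Finset.univ.erase m, θ * (a + D) ^ (θ - 1) * (x l / x m) := by
      rw [hr, hT, Finset.sum_div, Finset.mul_sum]
    rw [hrw, Finset.mul_sum]
    apply Finset.sum_le_sum
    intro l _
    have hb1 : (1:ℝ) ≤ Real.log (x l) := le_trans hL1 (hlog l)
    have hdiv : x l / x m = Real.exp (Real.log (x l) - a) := by
      rw [Real.exp_sub, ha, Real.exp_log (hxpos l), Real.exp_log (hxpos m)]
    rw [hdiv]
    exact aux_term θ D (Real.log (x l)) a hθ hD hb1 (hblea l)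
      (le_trans (le_trans hLK (hlog l)) (le_refl _))
  linarith
end
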